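/- arXiv:1006.2616 — 2 statements merged into one kernel-verified Lean document; each statement's English description precedes it below -/
import Mathlib

section
/- If an open graph (G, I, O) has a gflow, then |I| ≤ |O|. -/
open scoped Classical symmDiff
noncomputable section

set_option linter.unusedSectionVars false

variable {V : Type*} [Fintype V] [DecidableEq V]

/-- Odd neighborhood: vertices with an odd number of neighbors in `S`. -/
def oddNbhd (G : SimpleGraph V) (S : Finset V) : Finset V :=
  Finset.univ.filter fun v => Odd (S.filter (G.Adj v)).card

/-- `(g, r)` is a gflow of the open graph `(G, I, O)`. -/
def IsGflow (G : SimpleGraph V) (I O : Finset V)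
    (g : V → Finset V) (r : V → V → Prop) : Prop :=
  IsStrictOrder V r ∧
  ∀ u ∉ O,
    g u ⊆ Iᶜ ∧
    (∀ v ∈ g u, r u v) ∧
    u ∈ oddNbhd G (g u) ∧
    (∀ v ∈ oddNbhd G (g u), v ≠ u → r u v)

def HasGflow (G : SimpleGraph V) (I O : Finset V) : Prop :=
  ∃ g r, IsGflow G I O g r

/-- `g` is a focused gflow of the open graph `(G, I, O)`. -/
def IsFocusedGflow (G : SimpleGraph V) (I O : Finset V) (g : V → Finset V) : Prop :=
  (∀ u, ¬ Relation.TransGen (fun a b => a ∉ O ∧ b ∈ g a) u u) ∧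
  ∀ u ∉ O, g u ⊆ Iᶜ ∧ oddNbhd G (g u) ∩ Oᶜ = {u}

lemma zmod2_add_self (x : ZMod 2) : x + x = 0 := by
  have : (2 : ZMod 2) = 0 := rfl
  calc x + x = 2 * x := by ring
  _ = 0 := by rw [this, zero_mul]

lemma zmod2_cast_card (n : ℕ) : ((n : ZMod 2)) = if Odd n then 1 else 0 := by
  have h : n % 2 = if Odd n then 1 else 0 := by
    rcases Nat.even_or_odd n with h | h
    · rw [if_neg (by simpa using h)]; rw [Nat.even_iff] at h; omega
    · rw [if_pos h]; rw [Nat.odd_iff] at h; omega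
  rw [← ZMod.natCast_mod, h]
  split <;> simp

lemma sum_symmDiff_zmod2 (S T : Finset V) (f : V → ZMod 2) :
    ∑ v ∈ S ∆ T, f v = ∑ v ∈ S, f v + ∑ v ∈ T, f v := by
  have h1 : ∑ v ∈ S \ T, f v + ∑ v ∈ S ∩ T, f v = ∑ v ∈ S, f v := by
    rw [← Finset.sum_sdiff (Finset.inter_subset_left : S ∩ T ⊆ S),
      Finset.sdiff_inter_self_left]
  have h2 : ∑ v ∈ T \ S, f v + ∑ v ∈ S ∩ T, f v = ∑ v ∈ T, f v := by
    rw [← Finset.sum_sdiff (Finset.inter_subset_right : S ∩ T ⊆ T),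
      Finset.sdiff_inter_self_right]
  rw [symmDiff_def, Finset.sup_eq_union,
    Finset.sum_union disjoint_sdiff_sdiff, ← h1, ← h2]
  ring_nf
  rw [show ((2:ZMod 2)) = 0 from rfl, mul_zero, add_zero]

theorem card_inputs_le_card_outputs_of_hasGflow (G : SimpleGraph V) (I O : Finset V)
    (h : HasGflow G I O) : I.card ≤ O.card := by
  obtain ⟨g, r, hso, hgf⟩ := h
  haveI : IsTrans V r := hso.toIsTrans
  haveI : IsIrrefl V r := hso.toIrrefl
  set φ : Finset V → V → ZMod 2 :=
    fun S v => ∑ u ∈ S, if v ∈ g u then 1 else 0 with hφ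
  -- key: for nonempty S disjoint from O, φ S ≠ 0
  have key : ∀ S : Finset V, (∀ u ∈ S, u ∉ O) → S.Nonempty → φ S ≠ 0 := by
    intro S hSO hSne hzero
    -- pick a minimal element of S
    obtain ⟨u, huS, humin⟩ :=
      (Finite.wellFounded_of_trans_of_irrefl r).has_min (↑S : Set V) (by
        exact ⟨hSne.choose, hSne.choose_spec⟩)
    have hu : u ∉ O := hSO u huS
    obtain ⟨-, -, huodd, hodd⟩ := hgf u hu
    -- the ψ sum evaluated at u equals 1
    have hψ1 : (∑ u' ∈ S, if u ∈ oddNbhd G (g u') then (1 : ZMod 2) else 0) = 1 := by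
      rw [Finset.sum_eq_single u]
      · rw [if_pos huodd]
      · intro v hvS hvu
        rw [if_neg]
        intro hmem
        obtain ⟨-, -, -, hodd'⟩ := hgf v (hSO v hvS)
        exact humin v hvS (hodd' u hmem (fun e => hvu e.symm))
      · intro hu'; exact absurd huS hu'
    -- but it also equals a sum over w of φ S w terms, which is 0
    have hψ0 : (∑ u' ∈ S, if u ∈ oddNbhd G (g u') then (1 : ZMod 2) else 0) = 0 := by
      have step1 : ∀ u' : V, (if u ∈ oddNbhd G (g u') then (1 : ZMod 2) else 0)
          = ∑ w : V, if G.Adj u w then (if w ∈ g u' then (1:ZMod 2) else 0) else 0 := by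
        intro u'
        have hmem : (u ∈ oddNbhd G (g u')) ↔ Odd ((g u').filter (G.Adj u)).card := by
          simp [oddNbhd]
        have : (if u ∈ oddNbhd G (g u') then (1 : ZMod 2) else 0)
            = ((((g u').filter (G.Adj u)).card : ℕ) : ZMod 2) := by
          rw [zmod2_cast_card]
          by_cases hc : Odd ((g u').filter (G.Adj u)).card
          · rw [if_pos hc, if_pos (hmem.mpr hc)]
          · rw [if_neg hc, if_neg (fun hh => hc (hmem.mp hh))]
        rw [this, Finset.card_eq_sum_ones, Nat.cast_sum]
        rw [Finset.sum_filter]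
        rw [← Finset.sum_filter_add_sum_filter_not (Finset.univ : Finset V) (· ∈ g u')]
        have e1 : ∑ w ∈ Finset.univ.filter (· ∈ g u'),
            (if G.Adj u w then (if w ∈ g u' then (1:ZMod 2) else 0) else 0)
            = ∑ w ∈ g u', if G.Adj u w then ((1:ℕ) : ZMod 2) else ((0:ℕ) : ZMod 2) := by
          rw [Finset.filter_univ_mem]
          apply Finset.sum_congr rfl
          intro w hw
          rw [if_pos hw]
          simp
        have e2 : ∑ w ∈ Finset.univ.filter (¬ · ∈ g u'),
            (if G.Adj u w then (if w ∈ g u' then (1:ZMod 2) else 0) else 0) = 0 := by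
          apply Finset.sum_eq_zero
          intro w hw
          simp only [Finset.mem_filter] at hw
          rw [if_neg hw.2]
          split <;> rfl
        rw [e1, e2, add_zero]
        push_cast
        rfl
      calc (∑ u' ∈ S, if u ∈ oddNbhd G (g u') then (1 : ZMod 2) else 0)
          = ∑ u' ∈ S, ∑ w : V, if G.Adj u w then (if w ∈ g u' then (1:ZMod 2) else 0) else 0 :=
            Finset.sum_congr rfl (fun u' _ => step1 u')
        _ = ∑ w : V, ∑ u' ∈ S, if G.Adj u w then (if w ∈ g u' then (1:ZMod 2) else 0) else 0 :=
            Finset.sum_comm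
        _ = ∑ w : V, if G.Adj u w then φ S w else 0 := by
            apply Finset.sum_congr rfl
            intro w _
            by_cases ha : G.Adj u w
            · simp only [if_pos ha, hφ]
            · simp only [if_neg ha, Finset.sum_const_zero]
        _ = 0 := by
            apply Finset.sum_eq_zero
            intro w _
            rw [hzero]
            split <;> rfl
    rw [hψ1] at hψ0
    exact one_ne_zero hψ0
  -- injectivity of φ on subsets of Oᶜ
  have hinj : ∀ S ∈ Oᶜ.powerset, ∀ T ∈ Oᶜ.powerset, φ S = φ T → S = T := by
    intro S hS T hT hEq
    simp only [Finset.mem_powerset] at hS hT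
    by_contra hne
    have hne' : (S ∆ T).Nonempty := by
      rw [Finset.nonempty_iff_ne_empty]
      intro he
      exact hne (symmDiff_eq_bot.mp he)
    refine key (S ∆ T) (fun u hu => ?_) hne' ?_
    · have : u ∈ S ∪ T := by
        rw [Finset.mem_union]
        rcases Finset.mem_symmDiff.mp hu with ⟨h1, _⟩ | ⟨h1, _⟩
        · exact Or.inl h1
        · exact Or.inr h1
      rcases Finset.mem_union.mp this with h1 | h1
      · simpa using hS h1
      · simpa using hT h1
    · funext v
      have := sum_symmDiff_zmod2 S T (fun u => if v ∈ g u then (1:ZMod 2) else 0)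
      show φ (S ∆ T) v = 0
      rw [hφ]
      simp only
      rw [this]
      have : φ S v = φ T v := congrFun hEq v
      rw [hφ] at this
      simp only at this
      rw [this, zmod2_add_self]
  -- build the injection into the powerset of Iᶜ
  have hmaps : ∀ S ∈ Oᶜ.powerset,
      (Finset.univ.filter fun v => φ S v = 1) ∈ Iᶜ.powerset := by
    intro S hS
    simp only [Finset.mem_powerset] at hS ⊢
    intro v hv
    simp only [Finset.mem_filter] at hv
    rw [Finset.mem_compl]
    intro hvI
    have : φ S v = 0 := by
      rw [hφ]
      apply Finset.sum_eq_zero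
      intro u huS
      have hu : u ∉ O := by simpa using hS huS
      obtain ⟨hsub, -, -, -⟩ := hgf u hu
      rw [if_neg (fun hm => by simpa using (Finset.mem_compl.mp (hsub hm)) hvI)]
    rw [this] at hv
    exact one_ne_zero hv.2.symm
  have hcard : Oᶜ.powerset.card ≤ Iᶜ.powerset.card := by
    apply Finset.card_le_card_of_injOn (fun S => Finset.univ.filter fun v => φ S v = 1)
      (fun S hS => hmaps S hS)
    intro S hS T hT hFeq
    refine hinj S hS T hT (funext fun v => ?_)
    have hFeq' : (Finset.univ.filter fun v => φ S v = 1)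
        = (Finset.univ.filter fun v => φ T v = 1) := hFeq
    have hv := Finset.ext_iff.mp hFeq' v
    simp only [Finset.mem_filter, Finset.mem_univ, true_and] at hv
    have h2 : ∀ x : ZMod 2, x = 0 ∨ x = 1 := by decide
    rcases h2 (φ S v) with h1 | h1 <;> rcases h2 (φ T v) with h2' | h2'
    · rw [h1, h2']
    · exfalso; rw [h1] at hv; rw [h2'] at hv
      exact zero_ne_one (hv.mpr rfl)
    · exfalso; rw [h1] at hv; rw [h2'] at hv
      exact zero_ne_one (hv.mp rfl)
    · rw [h1, h2']
  rw [Finset.card_powerset, Finset.card_powerset] at hcard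
  have h1 : Oᶜ.card ≤ Iᶜ.card := by
    exact (Nat.pow_le_pow_iff_right (by norm_num)).mp hcard
  rw [Finset.card_compl, Finset.card_compl] at h1
  have h2 := Finset.card_le_univ O
  have h3 := Finset.card_le_univ I
  omega
end
end

section
/- If |I| = |O|, then the open graph (G, I, O) has a gflow if and only if the reversed open graph (G, O, I) has a gflow. -/
open scoped Classical
noncomputable section

variable {V : Type*} [Fintype V] [DecidableEq V]

set_option linter.unusedSectionVars false
set_option maxHeartbeats 800000

lemma odd_iff_cast (n : ℕ) : Odd n ↔ (n : ZMod 2) = 1 := by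
  rw [Nat.odd_iff]
  constructor
  · intro h; rw [← ZMod.natCast_mod, h]; norm_num
  · intro h
    by_contra hc
    have h0 : n % 2 = 0 := by omega
    rw [← ZMod.natCast_mod, h0] at h
    simp at h

lemma zmod2_cases (a : ZMod 2) : a = 0 ∨ a = 1 := by revert a; decide

def nbSum (G : SimpleGraph V) (x : V → ZMod 2) (w : V) : ZMod 2 :=
  ∑ v, (if G.Adj w v then 1 else 0) * x v

def ind (S : Finset V) : V → ZMod 2 := fun v => if v ∈ S then 1 else 0

def vecSet (x : V → ZMod 2) : Finset V := Finset.univ.filter fun v => x v = 1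

lemma mem_vecSet {x : V → ZMod 2} {v : V} : v ∈ vecSet x ↔ x v = 1 := by
  simp [vecSet]

lemma ind_vecSet (x : V → ZMod 2) : ind (vecSet x) = x := by
  funext v
  rcases zmod2_cases (x v) with h | h <;> simp [ind, mem_vecSet, h]

lemma nbSum_add (G : SimpleGraph V) (x y : V → ZMod 2) (w : V) :
    nbSum G (x + y) w = nbSum G x w + nbSum G y w := by
  simp [nbSum, mul_add, Finset.sum_add_distrib]

lemma nbSum_finsum (G : SimpleGraph V) (S : Finset V) (y : V → V → ZMod 2) (w : V) :
    nbSum G (∑ v ∈ S, y v) w = ∑ v ∈ S, nbSum G (y v) w := by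
  unfold nbSum
  rw [Finset.sum_comm]
  congr 1
  funext v
  simp [Finset.mul_sum]

lemma nbSum_ind (G : SimpleGraph V) (S : Finset V) (w : V) :
    nbSum G (ind S) w = if w ∈ oddNbhd G S then 1 else 0 := by
  have h1 : nbSum G (ind S) w = ((S.filter (G.Adj w)).card : ZMod 2) := by
    unfold nbSum ind
    rw [← Finset.sum_boole]
    have hpt : ∀ v, (if G.Adj w v then (1:ZMod 2) else 0) * (if v ∈ S then 1 else 0)
        = if v ∈ S then (if G.Adj w v then (1:ZMod 2) else 0) else 0 := by
      intro v; by_cases h : v ∈ S <;> by_cases h2 : G.Adj w v <;> simp [h, h2]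
    simp_rw [hpt]
    rw [Finset.sum_ite_mem, Finset.univ_inter]
  rw [h1]
  by_cases h : w ∈ oddNbhd G S
  · simp only [oddNbhd, Finset.mem_filter] at h
    rw [if_pos (by simpa [oddNbhd] using h)]
    exact (odd_iff_cast _).1 h.2
  · rw [if_neg h]
    simp only [oddNbhd, Finset.mem_filter, Finset.mem_univ, true_and] at h
    rcases zmod2_cases ((S.filter (G.Adj w)).card : ZMod 2) with h0 | h0
    · exact h0
    · exact absurd ((odd_iff_cast _).2 h0) h

lemma mem_oddNbhd_vecSet {G : SimpleGraph V} {x : V → ZMod 2} {w : V} :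
    w ∈ oddNbhd G (vecSet x) ↔ nbSum G x w = 1 := by
  conv_rhs => rw [← ind_vecSet x]
  rw [nbSum_ind]
  by_cases h : w ∈ oddNbhd G (vecSet x) <;> simp [h]

lemma mem_oddNbhd_nbSum {G : SimpleGraph V} {S : Finset V} {w : V} :
    w ∈ oddNbhd G S ↔ nbSum G (ind S) w = 1 := by
  rw [nbSum_ind]
  by_cases h : w ∈ oddNbhd G S <;> simp [h]


lemma gflow_to_focused {G : SimpleGraph V} {I O : Finset V} {g : V → Finset V}
    {r : V → V → Prop} (hg : IsGflow G I O g r) : ∃ g', IsFocusedGflow G I O g' := by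
  obtain ⟨hso, hprop⟩ := hg
  haveI hirr : IsIrrefl V r := hso.toIrrefl
  haveI htr : IsTrans V r := hso.toIsTrans
  haveI : IsTrans V (flip r) := ⟨fun a b c hab hbc => htr.trans c b a hbc hab⟩
  haveI : IsIrrefl V (flip r) := ⟨fun a => hirr.irrefl a⟩
  have wf : WellFounded (flip r) := Finite.wellFounded_of_trans_of_irrefl _
  set S : V → Finset V := fun u => (oddNbhd G (g u) ∩ Oᶜ).erase u with hS
  set y : V → V → ZMod 2 := wf.fix (fun u rec =>
    ind (g u) + ∑ v ∈ (S u).attach, if h : flip r ↑v u then rec ↑v h else 0) with hy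
  have y_eq : ∀ u, y u = ind (g u) + ∑ v ∈ (S u).attach,
      if _ : flip r ↑v u then y ↑v else 0 := by
    intro u
    rw [hy]
    rw [wf.fix_eq]
  have hSr : ∀ u, u ∉ O → ∀ v ∈ S u, r u v := by
    intro u hu v hv
    rw [hS] at hv
    simp only [Finset.mem_erase, Finset.mem_inter, Finset.mem_compl] at hv
    exact (hprop u hu).2.2.2 v hv.2.1 hv.1
  have y_eq' : ∀ u, u ∉ O → y u = ind (g u) + ∑ v ∈ S u, y v := by
    intro u hu
    rw [y_eq u]
    congr 1
    rw [← Finset.sum_attach (S u) y]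
    apply Finset.sum_congr rfl
    intro v _
    rw [dif_pos (show flip r (↑v) u from hSr u hu ↑v v.2)]
  -- P1: support of y u is r-above u
  have P1 : ∀ u, u ∉ O → ∀ b, ¬ r u b → y u b = 0 := by
    intro u
    induction u using wf.induction with
    | _ u ih =>
      intro hu b hb
      rw [y_eq' u hu]
      simp only [Pi.add_apply, Finset.sum_apply]
      have h1 : ind (g u) b = 0 := by
        unfold ind
        rw [if_neg]
        intro hmem
        exact hb ((hprop u hu).2.1 b hmem)
      rw [h1, zero_add]
      apply Finset.sum_eq_zero
      intro v hv
      have hrv : r u v := hSr u hu v hv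
      have hvO : v ∉ O := by
        rw [hS] at hv
        simp only [Finset.mem_erase, Finset.mem_inter, Finset.mem_compl] at hv
        exact hv.2.2
      exact ih v hrv hvO b (fun hc => hb (htr.trans u v b hrv hc))
  -- P2: y u vanishes on I
  have P2 : ∀ u, u ∉ O → ∀ b ∈ I, y u b = 0 := by
    intro u
    induction u using wf.induction with
    | _ u ih =>
      intro hu b hb
      rw [y_eq' u hu]
      simp only [Pi.add_apply, Finset.sum_apply]
      have h1 : ind (g u) b = 0 := by
        unfold ind
        rw [if_neg]
        intro hmem
        exact (Finset.mem_compl.1 ((hprop u hu).1 hmem)) hb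
      rw [h1, zero_add]
      apply Finset.sum_eq_zero
      intro v hv
      have hvO : v ∉ O := by
        rw [hS] at hv
        simp only [Finset.mem_erase, Finset.mem_inter, Finset.mem_compl] at hv
        exact hv.2.2
      exact ih v (hSr u hu v hv) hvO b hb
  -- P3: focusing property
  have P3 : ∀ u, u ∉ O → ∀ w, w ∉ O → nbSum G (y u) w = if w = u then 1 else 0 := by
    intro u
    induction u using wf.induction with
    | _ u ih =>
      intro hu w hw
      rw [y_eq' u hu, nbSum_add, nbSum_finsum]
      have hsum : (∑ v ∈ S u, nbSum G (y v) w) = ∑ v ∈ S u, if w = v then (1:ZMod 2) else 0 := by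
        apply Finset.sum_congr rfl
        intro v hv
        have hvO : v ∉ O := by
          rw [hS] at hv
          simp only [Finset.mem_erase, Finset.mem_inter, Finset.mem_compl] at hv
          exact hv.2.2
        exact ih v (hSr u hu v hv) hvO w hw
      rw [hsum, nbSum_ind]
      rw [Finset.sum_ite_eq (S u) w (fun _ => (1:ZMod 2))]
      by_cases hwu : w = u
      · subst hwu
        have h1 : w ∈ oddNbhd G (g w) := (hprop w hu).2.2.1
        have h2 : w ∉ S w := by simp [hS]
        simp [h1, h2]
      · rw [if_neg hwu]
        by_cases hmem : w ∈ oddNbhd G (g u)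
        · have h2 : w ∈ S u := by
            rw [hS]
            simp only [Finset.mem_erase, Finset.mem_inter, Finset.mem_compl]
            exact ⟨hwu, hmem, hw⟩
          simp only [if_pos hmem, if_pos h2]
          exact CharTwo.add_self_eq_zero 1
        · have h2 : w ∉ S u :=
            fun hc => hmem (Finset.mem_inter.1 (Finset.mem_erase.1 hc).2).1
          simp [hmem, h2]
  -- assemble the focused gflow
  refine ⟨fun u => if u ∈ O then ∅ else vecSet (y u), ?_, ?_⟩
  · intro u hu
    have hsub : ∀ a b, (a ∉ O ∧ b ∈ (if a ∈ O then ∅ else vecSet (y a))) → r a b := by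
      intro a b ⟨ha, hb⟩
      rw [if_neg ha] at hb
      by_contra hc
      rw [mem_vecSet] at hb
      rw [P1 a ha b hc] at hb
      exact one_ne_zero hb.symm
    have := Relation.TransGen.mono hsub _ _ hu
    rw [Relation.transGen_eq_self (r := r)] at this
    exact hirr.irrefl u this
  · intro u hu
    simp only [if_neg hu]
    constructor
    · intro b hb
      rw [mem_vecSet] at hb
      rw [Finset.mem_compl]
      intro hbI
      rw [P2 u hu b hbI] at hb
      exact one_ne_zero hb.symm
    · ext w
      simp only [Finset.mem_inter, Finset.mem_compl, Finset.mem_singleton]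
      constructor
      · intro ⟨h1, h2⟩
        rw [mem_oddNbhd_vecSet, P3 u hu w h2] at h1
        by_contra hc
        rw [if_neg hc] at h1
        exact one_ne_zero h1.symm
      · intro h
        subst h
        refine ⟨?_, hu⟩
        rw [mem_oddNbhd_vecSet, P3 w hu w hu, if_pos rfl]

lemma focused_to_gflow {G : SimpleGraph V} {I O : Finset V} {g : V → Finset V}
    (hf : IsFocusedGflow G I O g) : HasGflow G I O := by
  obtain ⟨hac, hfoc⟩ := hf
  set s : V → V → Prop := fun a b => a ∉ O ∧ (b ∈ g a ∨ (b ∈ oddNbhd G (g a) ∧ b ≠ a)) with hs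
  refine ⟨g, Relation.TransGen s, ⟨{ toIrrefl := ⟨?_⟩, toIsTrans := ⟨fun a b c => Relation.TransGen.trans⟩ }, ?_⟩⟩
  · -- irreflexivity
    intro u hu
    -- first: u ∉ O
    have src : ∀ a b, Relation.TransGen s a b → a ∉ O := by
      intro a b h
      induction h with
      | @single b h1 => exact h1.1
      | tail _ _ ih => exact ih
    have huO : u ∉ O := src u u hu
    -- reduce any TransGen s path ending outside O to a pure g-path
    have key : ∀ a b, Relation.TransGen s a b → b ∉ O →
        Relation.TransGen (fun a b => a ∉ O ∧ b ∈ g a) a b := by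
      intro a b h
      induction h with
      | @single b h1 =>
        intro hb
        refine Relation.TransGen.single ⟨h1.1, ?_⟩
        rcases h1.2 with h | ⟨h, hne⟩
        · exact h
        · exfalso
          have : b ∈ oddNbhd G (g a) ∩ Oᶜ := Finset.mem_inter.2 ⟨h, Finset.mem_compl.2 hb⟩
          rw [(hfoc a h1.1).2] at this
          exact hne (Finset.mem_singleton.1 this)
      | @tail c b' h1 h2 ih =>
        intro hb
        have hcO : c ∉ O := h2.1
        refine (ih hcO).tail ⟨hcO, ?_⟩
        rcases h2.2 with h | ⟨h, hne⟩
        · exact h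
        · exfalso
          have : b' ∈ oddNbhd G (g c) ∩ Oᶜ := Finset.mem_inter.2 ⟨h, Finset.mem_compl.2 hb⟩
          rw [(hfoc c hcO).2] at this
          exact hne (Finset.mem_singleton.1 this)
    exact hac u (key u u hu huO)
  · intro u hu
    obtain ⟨hsub, hodd⟩ := hfoc u hu
    have humem : u ∈ oddNbhd G (g u) := by
      have : u ∈ oddNbhd G (g u) ∩ Oᶜ := by rw [hodd]; exact Finset.mem_singleton_self u
      exact (Finset.mem_inter.1 this).1
    exact ⟨hsub, fun v hv => Relation.TransGen.single ⟨hu, Or.inl hv⟩, humem,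
      fun v hv hne => Relation.TransGen.single ⟨hu, Or.inr ⟨hv, hne⟩⟩⟩

lemma focused_reverse {G : SimpleGraph V} {I O : Finset V} {g : V → Finset V}
    (h : I.card = O.card) (hf : IsFocusedGflow G I O g) :
    ∃ g', IsFocusedGflow G O I g' := by
  obtain ⟨hac, hfoc⟩ := hf
  set A : Matrix ↥(Oᶜ : Finset V) ↥(Iᶜ : Finset V) (ZMod 2) :=
    Matrix.of fun v w => if G.Adj ↑v ↑w then 1 else 0 with hA
  set X : Matrix ↥(Iᶜ : Finset V) ↥(Oᶜ : Finset V) (ZMod 2) :=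
    Matrix.of fun w u => if ↑w ∈ g ↑u then 1 else 0 with hX
  have hAX : A * X = 1 := by
    ext v u
    have huO : (↑u : V) ∉ O := Finset.mem_compl.1 u.2
    rw [Matrix.mul_apply]
    have hstep : ∀ w : ↥(Iᶜ : Finset V), A v w * X w u =
        (if G.Adj ↑v ↑w then (1:ZMod 2) else 0) * ind (g ↑u) ↑w := by
      intro w
      simp only [hA, hX, Matrix.of_apply, ind]
    simp_rw [hstep]
    have hsum : (∑ w : ↥(Iᶜ : Finset V), (if G.Adj ↑v ↑w then (1:ZMod 2) else 0) * ind (g ↑u) ↑w)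
        = nbSum G (ind (g ↑u)) ↑v := by
      rw [Finset.sum_coe_sort (Iᶜ : Finset V)
        (fun w => (if G.Adj ↑v w then (1:ZMod 2) else 0) * ind (g ↑u) w)]
      unfold nbSum
      apply Finset.sum_subset (Finset.subset_univ _)
      intro w _ hw
      have : w ∉ g ↑u := fun hc => hw ((hfoc ↑u huO).1 hc)
      simp [ind, this]
    rw [hsum, nbSum_ind]
    have hmem : (↑v : V) ∈ oddNbhd G (g ↑u) ↔ v = u := by
      constructor
      · intro hm
        have : (↑v : V) ∈ oddNbhd G (g ↑u) ∩ Oᶜ := Finset.mem_inter.2 ⟨hm, v.2⟩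
        rw [(hfoc ↑u huO).2] at this
        exact Subtype.ext (Finset.mem_singleton.1 this)
      · intro he
        subst he
        have : (↑v : V) ∈ oddNbhd G (g ↑v) ∩ Oᶜ := by
          rw [(hfoc ↑v huO).2]; exact Finset.mem_singleton_self _
        exact (Finset.mem_inter.1 this).1
    rw [Matrix.one_apply]
    by_cases hvu : v = u
    · rw [if_pos (hmem.2 hvu), if_pos hvu]
    · rw [if_neg (fun hc => hvu (hmem.1 hc)), if_neg hvu]
  -- transpose-side identity
  have hcard : Fintype.card ↥(Oᶜ : Finset V) = Fintype.card ↥(Iᶜ : Finset V) := by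
    simp only [Fintype.card_coe, Finset.card_compl, h]
  let e : ↥(Oᶜ : Finset V) ≃ ↥(Iᶜ : Finset V) := Fintype.equivOfCardEq hcard
  have hXA : ∀ w w' : ↥(Iᶜ : Finset V),
      (∑ v : ↥(Oᶜ : Finset V), X w v * A v w') = if w = w' then 1 else 0 := by
    have hA'X' : (A.submatrix id e) * (X.submatrix e id) = 1 := by
      ext v u
      rw [Matrix.mul_apply]
      have : ∀ k : ↥(Oᶜ : Finset V),
          (A.submatrix id e) v k * (X.submatrix e id) k u = A v (e k) * X (e k) u := by
        intro k; simp [Matrix.submatrix_apply]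
      simp_rw [this]
      rw [Equiv.sum_comp e (fun w => A v w * X w u), ← Matrix.mul_apply, hAX]
    have hX'A' : (X.submatrix e id) * (A.submatrix id e) = 1 :=
      mul_eq_one_comm.1 hA'X'
    intro w w'
    have := congrFun (congrFun hX'A' (e.symm w)) (e.symm w')
    rw [Matrix.mul_apply] at this
    simp only [Matrix.submatrix_apply, id_eq, Equiv.apply_symm_apply, Matrix.one_apply] at this
    rw [this]
    by_cases hww : w = w'
    · rw [if_pos (by rw [hww]), if_pos hww]
    · rw [if_neg (fun hc => hww (e.symm.injective hc)), if_neg hww]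
  -- the reversed gflow
  set g' : V → Finset V := fun a => Finset.univ.filter (fun b => b ∉ O ∧ a ∈ g b) with hg'
  have hg'mem : ∀ a b, b ∈ g' a ↔ b ∉ O ∧ a ∈ g b := by
    intro a b; simp [hg']
  refine ⟨g', ?_, ?_⟩
  · intro u hu
    have hmono : ∀ a b, (a ∉ I ∧ b ∈ g' a) →
        Function.swap (fun a b => a ∉ O ∧ b ∈ g a) a b := by
      intro a b ⟨_, hb⟩
      rw [hg'mem] at hb
      exact ⟨hb.1, hb.2⟩
    have := Relation.TransGen.mono hmono _ _ hu
    rw [Relation.transGen_swap] at this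
    exact hac u this
  · intro a haI
    constructor
    · intro b hb
      rw [hg'mem] at hb
      exact Finset.mem_compl.2 hb.1
    · -- key computation
      have key : ∀ w, w ∉ I → (w ∈ oddNbhd G (g' a) ↔ w = a) := by
        intro w hwI
        rw [mem_oddNbhd_nbSum]
        have hcomp : nbSum G (ind (g' a)) w =
            ∑ v : ↥(Oᶜ : Finset V), X ⟨a, Finset.mem_compl.2 haI⟩ v * A v ⟨w, Finset.mem_compl.2 hwI⟩ := by
          unfold nbSum
          have h0 : (∑ v : V, (if G.Adj w v then (1:ZMod 2) else 0) * ind (g' a) v)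
              = ∑ v ∈ (Oᶜ : Finset V), (if G.Adj w v then (1:ZMod 2) else 0) * ind (g' a) v := by
            refine (Finset.sum_subset (Finset.subset_univ _) ?_).symm
            intro v _ hv
            have hvg : v ∉ g' a := by
              rw [hg'mem]
              push_neg
              intro hvO
              exact absurd (Finset.mem_compl.2 hvO) hv
            simp [ind, hvg]
          rw [h0, ← Finset.sum_coe_sort (Oᶜ : Finset V)
            (fun v => (if G.Adj w v then (1:ZMod 2) else 0) * ind (g' a) v)]
          apply Finset.sum_congr rfl
          intro v _
          have hvO : (↑v : V) ∉ O := Finset.mem_compl.1 v.2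
          rcases Classical.em (G.Adj w ↑v) with hadj | hadj
          · have hadj' : G.Adj ↑v w := hadj.symm
            by_cases hm : a ∈ g ↑v <;>
              simp [hA, hX, ind, hg'mem, hvO, hm, hadj, hadj']
          · have hadj' : ¬ G.Adj ↑v w := fun hc => hadj hc.symm
            by_cases hm : a ∈ g ↑v <;>
              simp [hA, hX, ind, hg'mem, hvO, hm, hadj, hadj']
        rw [hcomp, hXA]
        constructor
        · intro h1
          by_contra hc
          rw [if_neg (fun he => hc (by simpa [Subtype.ext_iff] using he.symm))] at h1
          exact one_ne_zero h1.symm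
        · intro h1
          subst h1
          rw [if_pos rfl]
      ext w
      simp only [Finset.mem_inter, Finset.mem_compl, Finset.mem_singleton]
      constructor
      · intro ⟨h1, h2⟩
        exact (key w h2).1 h1
      · intro h1
        subst h1
        exact ⟨(key w haI).2 rfl, haI⟩

theorem hasGflow_reverse_iff (G : SimpleGraph V) (I O : Finset V) (h : I.card = O.card) :
    HasGflow G I O ↔ HasGflow G O I := by
  suffices H : ∀ I' O' : Finset V, I'.card = O'.card → HasGflow G I' O' → HasGflow G O' I' by
    exact ⟨H I O h, H O I h.symm⟩
  intro I' O' h' hg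
  obtain ⟨g, r, hgf⟩ := hg
  obtain ⟨g1, hf1⟩ := gflow_to_focused hgf
  obtain ⟨g2, hf2⟩ := focused_reverse h' hf1
  exact focused_to_gflow hf2
end
end
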